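/- Let σ be a type of variables, let N ≥ 1, let Q be a real symmetric N×N diagonally dominant matrix, and let z₁, …, z_N be polynomials in ℝ[σ] (multivariate polynomials over ℝ). Then the polynomial Σ_{α,β} Q_{αβ} · z_α · z_β is a sum of squares of polynomials. (In particular, every dsos polynomial is a sum of squares, giving the inclusion DSOS_{n,d} ⊆ SOS_{n,d}.) -/

import Mathlib

/-- A real symmetric `N×N` matrix is diagonally dominant if
`Q i i ≥ ∑_{j ≠ i} |Q i j|` for every `i`. -/
def IsDiagDom {N : ℕ} (Q : Matrix (Fin N) (Fin N) ℝ) : Prop :=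
  ∀ i, ∑ j ∈ Finset.univ.filter (fun j => j ≠ i), |Q i j| ≤ Q i i

open Finset

lemma aux_symm_nonneg {N : ℕ} (A : Matrix (Fin N) (Fin N) ℝ)
    (hsymm : ∀ i j, A i j = A j i) (hnn : ∀ i j, 0 ≤ A i j) (y : Fin N → ℝ) :
    0 ≤ ∑ i, ∑ j, A i j * (y i ^ 2 - y i * y j) := by
  have hswap : ∑ i, ∑ j, A i j * (y j ^ 2 - y j * y i)
      = ∑ i, ∑ j, A i j * (y i ^ 2 - y i * y j) := by
    rw [Finset.sum_comm]
    exact Finset.sum_congr rfl fun i _ => Finset.sum_congr rfl fun j _ => by rw [hsymm j i]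
  have hkey : (∑ i, ∑ j, A i j * (y i ^ 2 - y i * y j))
      + (∑ i, ∑ j, A i j * (y i ^ 2 - y i * y j))
      = ∑ i, ∑ j, A i j * (y i - y j) ^ 2 := by
    nth_rewrite 2 [← hswap]
    rw [← Finset.sum_add_distrib]
    refine Finset.sum_congr rfl fun i _ => ?_
    rw [← Finset.sum_add_distrib]
    exact Finset.sum_congr rfl fun j _ => by ring
  have hpos : 0 ≤ ∑ i, ∑ j, A i j * (y i - y j) ^ 2 :=
    Finset.sum_nonneg fun i _ => Finset.sum_nonneg fun j _ =>
      mul_nonneg (hnn i j) (sq_nonneg _)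
  linarith

lemma dd_quadform {N : ℕ} (Q : Matrix (Fin N) (Fin N) ℝ) (hQSymm : Q.IsSymm)
    (hQdd : IsDiagDom Q) (x : Fin N → ℝ) :
    0 ≤ ∑ i, ∑ j, Q i j * (x i * x j) := by
  set y : Fin N → ℝ := fun i => |x i| with hy
  have hAsymm : ∀ i j, |Q i j| = |Q j i| := fun i j => by
    rw [← hQSymm.apply i j]
  have hdiagzero : ∀ i, ∑ j, |Q i j| * (y i ^ 2 - y i * y j)
      = ∑ j ∈ univ.erase i, |Q i j| * (y i ^ 2 - y i * y j) := by
    intro i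
    rw [← Finset.add_sum_erase _ _ (Finset.mem_univ i)]
    simp [pow_two]
  have hrow : ∀ i, ∑ j, |Q i j| * (y i ^ 2 - y i * y j) ≤ ∑ j, Q i j * (x i * x j) := by
    intro i
    rw [hdiagzero i, ← Finset.add_sum_erase _ (fun j => Q i j * (x i * x j)) (Finset.mem_univ i)]
    have h1 : (∑ j ∈ univ.erase i, |Q i j|) * y i ^ 2 ≤ Q i i * (x i * x i) := by
      have herase : univ.filter (fun j => j ≠ i) = univ.erase i := by
        ext j; simp [Finset.mem_erase, and_comm]
      have hd := hQdd i
      rw [herase] at hd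
      have : y i ^ 2 = x i * x i := by simp [hy, pow_two, abs_mul_abs_self]
      rw [this]
      rcases le_or_gt 0 (x i * x i) with h | h
      · exact mul_le_mul_of_nonneg_right hd h
      · nlinarith [mul_self_nonneg (x i)]
    have h2 : ∀ j ∈ univ.erase i, -(|Q i j| * (y i * y j)) ≤ Q i j * (x i * x j) := by
      intro j _
      have : |Q i j * (x i * x j)| = |Q i j| * (y i * y j) := by
        rw [abs_mul, abs_mul]
      rw [← this]
      exact neg_abs_le _
    have h2' : ∑ j ∈ univ.erase i, -(|Q i j| * (y i * y j))
        ≤ ∑ j ∈ univ.erase i, Q i j * (x i * x j) := Finset.sum_le_sum h2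
    have hLHS : ∑ j ∈ univ.erase i, |Q i j| * (y i ^ 2 - y i * y j)
        = (∑ j ∈ univ.erase i, |Q i j|) * y i ^ 2
          + ∑ j ∈ univ.erase i, -(|Q i j| * (y i * y j)) := by
      rw [Finset.sum_mul, ← Finset.sum_add_distrib]
      exact Finset.sum_congr rfl fun j _ => by ring
    rw [hLHS]
    exact add_le_add h1 h2'
  calc 0 ≤ ∑ i, ∑ j, |Q i j| * (y i ^ 2 - y i * y j) :=
        aux_symm_nonneg (fun i j => |Q i j|) hAsymm (fun i j => abs_nonneg _) y
    _ ≤ ∑ i, ∑ j, Q i j * (x i * x j) := Finset.sum_le_sum fun i _ => hrow i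

lemma dd_posSemidef {N : ℕ} (Q : Matrix (Fin N) (Fin N) ℝ) (hQSymm : Q.IsSymm)
    (hQdd : IsDiagDom Q) : Q.PosSemidef := by
  refine Matrix.posSemidef_iff_dotProduct_mulVec.mpr ⟨?_, ?_⟩
  · rw [Matrix.IsHermitian, Matrix.conjTranspose_eq_transpose_of_trivial]
    exact hQSymm
  · intro x
    have h := dd_quadform Q hQSymm hQdd x
    have heq : dotProduct (star x) (Q.mulVec x)
        = ∑ i, ∑ j, Q i j * (x i * x j) := by
      simp only [dotProduct, Matrix.mulVec, star_trivial, Finset.mul_sum]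
      exact Finset.sum_congr rfl fun i _ => Finset.sum_congr rfl fun j _ => by ring
    rw [heq]
    exact h

open scoped MatrixOrder

/-- If `Q` is a real symmetric diagonally dominant `N×N` matrix and `z₁, …, z_N` are
multivariate real polynomials, then `∑_{α,β} Q_{αβ} z_α z_β` is a sum of squares of
polynomials. In particular every dsos polynomial is sos, i.e.
`DSOS_{n,d} ⊆ SOS_{n,d}`. -/
theorem dd_gram_sum_isSumSq {σ : Type*} {N : ℕ} (hN : 1 ≤ N)
    (Q : Matrix (Fin N) (Fin N) ℝ) (hQSymm : Q.IsSymm) (hQdd : IsDiagDom Q)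
    (z : Fin N → MvPolynomial σ ℝ) :
    IsSumSq (∑ α, ∑ β, MvPolynomial.C (Q α β) * z α * z β) := by
  have hPSD : Q.PosSemidef := dd_posSemidef Q hQSymm hQdd
  set S : Matrix (Fin N) (Fin N) ℝ := CFC.sqrt Q with hS
  have hSS : S * S = Q := CFC.sqrt_mul_sqrt_self Q hPSD.nonneg
  have hSsymm : ∀ i j, S i j = S j i := by
    intro i j
    have h := (Matrix.nonneg_iff_posSemidef.mp (CFC.sqrt_nonneg Q)).1
    rw [Matrix.IsHermitian, Matrix.conjTranspose_eq_transpose_of_trivial] at h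
    have h2 : S.transpose = S := h
    exact congrFun (congrFun h2 j) i
  have hQentry : ∀ α β, Q α β = ∑ k, S k α * S k β := by
    intro α β
    rw [← hSS]
    simp [Matrix.mul_apply]
    exact Finset.sum_congr rfl fun k _ => by rw [hSsymm α k]
  have hk : ∀ k, (∑ α, MvPolynomial.C (S k α) * z α) * (∑ β, MvPolynomial.C (S k β) * z β)
      = ∑ α, ∑ β, MvPolynomial.C (S k α * S k β) * (z α * z β) := by
    intro k
    rw [Finset.sum_mul_sum]
    exact Finset.sum_congr rfl fun α _ => Finset.sum_congr rfl fun β _ => by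
      rw [map_mul]; ring
  have hident : (∑ α, ∑ β, MvPolynomial.C (Q α β) * z α * z β)
      = ∑ k, (∑ α, MvPolynomial.C (S k α) * z α) * (∑ α, MvPolynomial.C (S k α) * z α) := by
    calc ∑ α, ∑ β, MvPolynomial.C (Q α β) * z α * z β
        = ∑ α, ∑ β, ∑ k, MvPolynomial.C (S k α * S k β) * (z α * z β) := by
          refine Finset.sum_congr rfl fun α _ => Finset.sum_congr rfl fun β _ => ?_
          rw [hQentry α β, map_sum, Finset.sum_mul, Finset.sum_mul]
          exact Finset.sum_congr rfl fun k _ => by ring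
      _ = ∑ α, ∑ k, ∑ β, MvPolynomial.C (S k α * S k β) * (z α * z β) :=
          Finset.sum_congr rfl fun α _ => Finset.sum_comm
      _ = ∑ k, ∑ α, ∑ β, MvPolynomial.C (S k α * S k β) * (z α * z β) := Finset.sum_comm
      _ = ∑ k, (∑ α, MvPolynomial.C (S k α) * z α) * (∑ α, MvPolynomial.C (S k α) * z α) :=
          Finset.sum_congr rfl fun k _ => (hk k).symm
  rw [hident]
  exact IsSumSq.sum_mul_self _ _
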